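/- Fix integers n ≥ 2 and 1 ≤ m ≤ n−1, and suppose given complex numbers p_S for every m-element subset S ⊆ {1,…,n} that satisfy the Plücker relations. Let ζ = e^{2πi/n}. Then the following two families also satisfy the Plücker relations: (i) p'_S = ζ^{s₁+…+s_m}·p_S, where S = {s₁,…,s_m}; (ii) p''_S = p_{S*}, where S* = {n+1−s : s ∈ S}. (This is the statement that the image of the dual Plücker embedding of Gr(n−k,n), with m = n−k, is invariant under the action of the dihedral group D_n induced by the dihedral projective representation, whose generator r scales the Plücker coordinate of a Young diagram d by ζ^{|d|} and whose generator s permutes Plücker coordinates by Poincaré duality of Young diagrams.) -/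
import Mathlib


noncomputable section

/-- Extension of a family of Plücker coordinates, indexed by subsets of `Fin n`
(`i : Fin n` representing the element `i+1` of `{1,…,n}`), to arbitrary `m`-tuples:
zero on tuples with repeated entries, and otherwise the coordinate of the underlying
set multiplied by the sign of the permutation sorting the tuple. -/
def pluckerExt (m n : ℕ) (p : Finset (Fin n) → ℂ) (v : Fin m → Fin n) : ℂ :=
  if Function.Injective v then
    ((Equiv.Perm.sign (Tuple.sort v) : ℤ) : ℂ) * p (Finset.univ.image v)
  else 0

/-- Exchange the entries of `u` in positions `L` (in increasing order) with the last
`t` entries of `v`, in order. -/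
def pluckerExchange (m n t : ℕ) (ht : t ≤ m) (u v : Fin m → Fin n)
    (L : Finset (Fin m)) (hL : L.card = t) : (Fin m → Fin n) × (Fin m → Fin n) :=
  (fun a => if h : a ∈ L then
      v ⟨m - t + ((L.orderIsoOfFin hL).symm ⟨a, h⟩ : Fin t), by
        have := ((L.orderIsoOfFin hL).symm ⟨a, h⟩).2; omega⟩
    else u a,
   fun b => if h : m - t ≤ (b : ℕ) then
      u (L.orderEmbOfFin hL ⟨(b : ℕ) - (m - t), by have := b.2; omega⟩)
    else v b)

/-- The family `p` satisfies the Plücker relations. -/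
def SatisfiesPlucker (m n : ℕ) (p : Finset (Fin n) → ℂ) : Prop :=
  ∀ (t : ℕ) (ht1 : 1 ≤ t) (ht2 : t ≤ m) (u v : Fin m → Fin n),
    pluckerExt m n p u * pluckerExt m n p v =
      ∑ L : Finset (Fin m), if hL : L.card = t then
        pluckerExt m n p (pluckerExchange m n t ht2 u v L hL).1 *
          pluckerExt m n p (pluckerExchange m n t ht2 u v L hL).2
      else 0

/-- The permutation of positions underlying `pluckerExchange`. -/
def exFun (m t : ℕ) (ht : t ≤ m) (L : Finset (Fin m)) (hL : L.card = t) :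
    Fin m ⊕ Fin m → Fin m ⊕ Fin m := fun x =>
  match x with
  | .inl a => if h : a ∈ L then
      .inr ⟨m - t + ((L.orderIsoOfFin hL).symm ⟨a, h⟩ : Fin t), by
        have := ((L.orderIsoOfFin hL).symm ⟨a, h⟩).2; omega⟩
    else .inl a
  | .inr b => if h : m - t ≤ (b : ℕ) then
      .inl (L.orderEmbOfFin hL ⟨(b : ℕ) - (m - t), by have := b.2; omega⟩)
    else .inr b

lemma exFun_involutive (m t : ℕ) (ht : t ≤ m) (L : Finset (Fin m)) (hL : L.card = t) :
    Function.Involutive (exFun m t ht L hL) := by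
  rintro (a | b)
  · dsimp only [exFun]
    by_cases h : a ∈ L
    · rw [dif_pos h]
      dsimp only [exFun]
      rw [dif_pos (by simp)]
      congr 1
      have h1 : (⟨(↑(⟨m - t + ((L.orderIsoOfFin hL).symm ⟨a, h⟩ : Fin t), by
          have := ((L.orderIsoOfFin hL).symm ⟨a, h⟩).2; omega⟩ : Fin m)) - (m - t), by
          have := ((L.orderIsoOfFin hL).symm ⟨a, h⟩).2; omega⟩ : Fin t) =
          (L.orderIsoOfFin hL).symm ⟨a, h⟩ := by
        apply Fin.ext; simp
      rw [h1, ← Finset.coe_orderIsoOfFin_apply, OrderIso.apply_symm_apply]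
    · rw [dif_neg h]; dsimp only [exFun]; rw [dif_neg h]
  · dsimp only [exFun]
    by_cases h : m - t ≤ (b : ℕ)
    · rw [dif_pos h]
      dsimp only [exFun]
      rw [dif_pos (L.orderEmbOfFin_mem hL _)]
      congr 1
      have h1 : (⟨L.orderEmbOfFin hL ⟨(b : ℕ) - (m - t), by have := b.2; omega⟩,
          L.orderEmbOfFin_mem hL _⟩ : L) =
          L.orderIsoOfFin hL ⟨(b : ℕ) - (m - t), by have := b.2; omega⟩ := by
        apply Subtype.ext
        rw [Finset.coe_orderIsoOfFin_apply]
      apply Fin.ext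
      simp only [h1, OrderIso.symm_apply_apply]
      have := b.2; omega
    · rw [dif_neg h]; dsimp only [exFun]; rw [dif_neg h]

/-- The exchange permutes the combined family of entries. -/
lemma exchange_elim (m n t : ℕ) (ht : t ≤ m) (u v : Fin m → Fin n)
    (L : Finset (Fin m)) (hL : L.card = t) :
    Sum.elim (pluckerExchange m n t ht u v L hL).1 (pluckerExchange m n t ht u v L hL).2 =
      Sum.elim u v ∘ exFun m t ht L hL := by
  funext x
  rcases x with a | b
  · dsimp only [pluckerExchange, exFun, Function.comp, Sum.elim]
    by_cases h : a ∈ L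
    · rw [dif_pos h, dif_pos h]
    · rw [dif_neg h, dif_neg h]
  · dsimp only [pluckerExchange, exFun, Function.comp, Sum.elim]
    by_cases h : m - t ≤ (b : ℕ)
    · rw [dif_pos h, dif_pos h]
    · rw [dif_neg h, dif_neg h]

lemma exchange_sum (m n t : ℕ) (ht : t ≤ m) (u v : Fin m → Fin n)
    (L : Finset (Fin m)) (hL : L.card = t) (g : Fin n → ℕ) :
    (∑ i, g ((pluckerExchange m n t ht u v L hL).1 i)) +
      (∑ i, g ((pluckerExchange m n t ht u v L hL).2 i)) =
      (∑ i, g (u i)) + (∑ i, g (v i)) := by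
  have hπ : Function.Bijective (exFun m t ht L hL) :=
    (exFun_involutive m t ht L hL).bijective
  let π : Equiv.Perm (Fin m ⊕ Fin m) := Equiv.ofBijective _ hπ
  calc (∑ i, g ((pluckerExchange m n t ht u v L hL).1 i)) +
      (∑ i, g ((pluckerExchange m n t ht u v L hL).2 i))
      = ∑ x : Fin m ⊕ Fin m,
        g (Sum.elim (pluckerExchange m n t ht u v L hL).1
          (pluckerExchange m n t ht u v L hL).2 x) := by
        rw [Fintype.sum_sum_type]; rfl
    _ = ∑ x : Fin m ⊕ Fin m, g (Sum.elim u v (π x)) := by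
        rw [exchange_elim m n t ht u v L hL]; rfl
    _ = ∑ x : Fin m ⊕ Fin m, g (Sum.elim u v x) :=
        Equiv.sum_comp π (fun x => g (Sum.elim u v x))
    _ = (∑ i, g (u i)) + (∑ i, g (v i)) := by rw [Fintype.sum_sum_type]; rfl

/-- Exchange commutes with postcomposition. -/
lemma exchange_comp (m n n' t : ℕ) (ht : t ≤ m) (u v : Fin m → Fin n)
    (L : Finset (Fin m)) (hL : L.card = t) (g : Fin n → Fin n') :
    pluckerExchange m n' t ht (g ∘ u) (g ∘ v) L hL =
      (g ∘ (pluckerExchange m n t ht u v L hL).1,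
       g ∘ (pluckerExchange m n t ht u v L hL).2) := by
  unfold pluckerExchange
  refine Prod.ext ?_ ?_ <;> funext a <;> dsimp only [Function.comp] <;> split <;> rfl

lemma ext_scale (m n : ℕ) (c : ℂ) (p : Finset (Fin n) → ℂ) (v : Fin m → Fin n) :
    pluckerExt m n (fun S => c ^ (∑ s ∈ S, ((s : ℕ) + 1)) * p S) v =
      c ^ (∑ i, ((v i : ℕ) + 1)) * pluckerExt m n p v := by
  unfold pluckerExt
  split
  · next h =>
      dsimp only
      rw [Finset.sum_image (fun x _ y _ hxy => h hxy)]
      ring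
  · rw [mul_zero]

lemma ext_rev (m n : ℕ) (p : Finset (Fin n) → ℂ) (v : Fin m → Fin n) :
    pluckerExt m n (fun S => p (S.image Fin.rev)) v =
      ((Equiv.Perm.sign (Fin.revPerm : Equiv.Perm (Fin m)) : ℤ) : ℂ) *
        pluckerExt m n p (Fin.rev ∘ v) := by
  unfold pluckerExt
  by_cases h : Function.Injective v
  · have hrv : Function.Injective (Fin.rev ∘ v) := Fin.rev_injective.comp h
    rw [if_pos h, if_pos hrv]
    have himg : Finset.univ.image (Fin.rev ∘ v) = (Finset.univ.image v).image Fin.rev := by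
      rw [Finset.image_image]
    have hsort : Tuple.sort (Fin.rev ∘ v) =
        Tuple.sort v * (Fin.revPerm : Equiv.Perm (Fin m)) := by
      have hmono : Monotone ((Fin.rev ∘ v) ∘ ⇑(Tuple.sort v * (Fin.revPerm : Equiv.Perm (Fin m)))) := by
        have hsm : StrictMono (v ∘ ⇑(Tuple.sort v)) :=
          (Tuple.monotone_sort v).strictMono_of_injective
            (h.comp (Tuple.sort v).injective)
        have : StrictMono ((Fin.rev ∘ v) ∘ ⇑(Tuple.sort v * (Fin.revPerm : Equiv.Perm (Fin m)))) := by
          intro i j hij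
          have h1 : Fin.rev j < Fin.rev i := Fin.rev_lt_rev.mpr hij
          have h2 : v (Tuple.sort v (Fin.rev j)) < v (Tuple.sort v (Fin.rev i)) := hsm h1
          simpa [Equiv.Perm.mul_apply] using Fin.rev_lt_rev.mpr h2
        exact this.monotone
      have key := Tuple.unique_monotone (Tuple.monotone_sort (Fin.rev ∘ v)) hmono
      exact Equiv.ext fun i => hrv (congrFun key i)
    rw [hsort, map_mul]
    push_cast
    have hsq : ((Equiv.Perm.sign (Fin.revPerm : Equiv.Perm (Fin m)) : ℤ) : ℂ) *
        ((Equiv.Perm.sign (Fin.revPerm : Equiv.Perm (Fin m)) : ℤ) : ℂ) = 1 := by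
      rcases Int.units_eq_one_or (Equiv.Perm.sign (Fin.revPerm : Equiv.Perm (Fin m))) with
        h1 | h1 <;> rw [h1] <;> norm_num
    rw [himg]
    calc ((Equiv.Perm.sign (Tuple.sort v) : ℤ) : ℂ) * p ((Finset.univ.image v).image Fin.rev)
        = (((Equiv.Perm.sign (Fin.revPerm : Equiv.Perm (Fin m)) : ℤ) : ℂ) *
            ((Equiv.Perm.sign (Fin.revPerm : Equiv.Perm (Fin m)) : ℤ) : ℂ)) *
          (((Equiv.Perm.sign (Tuple.sort v) : ℤ) : ℂ) *
            p ((Finset.univ.image v).image Fin.rev)) := by rw [hsq, one_mul]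
      _ = _ := by ring
  · have hrv : ¬ Function.Injective (Fin.rev ∘ v) := by
      intro hc
      exact h (fun a b hab => hc (by simp [Function.comp, hab]))
    rw [if_neg h, if_neg hrv, mul_zero]

/-- If the Plücker coordinates `p_S` satisfy the Plücker relations, then so do the
families `p'_S = ζ^{s₁+…+s_m}·p_S` (with `ζ = e^{2πi/n}`) and `p''_S = p_{S*}` where
`S* = {n+1−s : s ∈ S}`: the image of the dual Plücker embedding of the Grassmannian is
invariant under the dihedral projective representation. -/
theorem plucker_relations_dihedral_invariant (m n : ℕ) (hn : 2 ≤ n)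
    (hm1 : 1 ≤ m) (hm2 : m ≤ n - 1) (p : Finset (Fin n) → ℂ)
    (hp : SatisfiesPlucker m n p) :
    SatisfiesPlucker m n (fun S =>
      Complex.exp (2 * Real.pi * Complex.I / n) ^ (∑ s ∈ S, ((s : ℕ) + 1)) * p S) ∧
    SatisfiesPlucker m n (fun S => p (S.image Fin.rev)) := by
  constructor
  · -- rotation invariance
    intro t ht1 ht2 u v
    set c : ℂ := Complex.exp (2 * Real.pi * Complex.I / n) with hc
    have key := hp t ht1 ht2 u v
    rw [ext_scale, ext_scale]
    have hRHS : ∑ L : Finset (Fin m), (if hL : L.card = t then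
        pluckerExt m n (fun S => c ^ (∑ s ∈ S, ((s : ℕ) + 1)) * p S)
          (pluckerExchange m n t ht2 u v L hL).1 *
        pluckerExt m n (fun S => c ^ (∑ s ∈ S, ((s : ℕ) + 1)) * p S)
          (pluckerExchange m n t ht2 u v L hL).2 else 0) =
        c ^ ((∑ i, ((u i : ℕ) + 1)) + (∑ i, ((v i : ℕ) + 1))) *
        ∑ L : Finset (Fin m), (if hL : L.card = t then
          pluckerExt m n p (pluckerExchange m n t ht2 u v L hL).1 *
          pluckerExt m n p (pluckerExchange m n t ht2 u v L hL).2 else 0) := by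
      rw [Finset.mul_sum]
      refine Finset.sum_congr rfl fun L _ => ?_
      by_cases hL : L.card = t
      · rw [dif_pos hL, dif_pos hL, ext_scale, ext_scale]
        have hs := exchange_sum m n t ht2 u v L hL (fun x => (x : ℕ) + 1)
        calc c ^ (∑ i, (((pluckerExchange m n t ht2 u v L hL).1 i : ℕ) + 1)) *
              pluckerExt m n p (pluckerExchange m n t ht2 u v L hL).1 *
            (c ^ (∑ i, (((pluckerExchange m n t ht2 u v L hL).2 i : ℕ) + 1)) *
              pluckerExt m n p (pluckerExchange m n t ht2 u v L hL).2)
            = c ^ ((∑ i, (((pluckerExchange m n t ht2 u v L hL).1 i : ℕ) + 1)) +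
                (∑ i, (((pluckerExchange m n t ht2 u v L hL).2 i : ℕ) + 1))) *
              (pluckerExt m n p (pluckerExchange m n t ht2 u v L hL).1 *
                pluckerExt m n p (pluckerExchange m n t ht2 u v L hL).2) := by
              rw [pow_add]; ring
          _ = _ := by rw [hs]
      · rw [dif_neg hL, dif_neg hL, mul_zero]
    rw [hRHS, ← key, pow_add]
    ring
  · -- reflection invariance
    intro t ht1 ht2 u v
    set ε : ℂ := ((Equiv.Perm.sign (Fin.revPerm : Equiv.Perm (Fin m)) : ℤ) : ℂ) with hε
    have hsq : ε * ε = 1 := by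
      rcases Int.units_eq_one_or (Equiv.Perm.sign (Fin.revPerm : Equiv.Perm (Fin m))) with
        h1 | h1 <;> rw [hε, h1] <;> norm_num
    have key := hp t ht1 ht2 (Fin.rev ∘ u) (Fin.rev ∘ v)
    rw [ext_rev, ext_rev, ← hε]
    have hRHS : ∑ L : Finset (Fin m), (if hL : L.card = t then
        pluckerExt m n (fun S => p (S.image Fin.rev))
          (pluckerExchange m n t ht2 u v L hL).1 *
        pluckerExt m n (fun S => p (S.image Fin.rev))
          (pluckerExchange m n t ht2 u v L hL).2 else 0) =
        ∑ L : Finset (Fin m), (if hL : L.card = t then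
          pluckerExt m n p (pluckerExchange m n t ht2 (Fin.rev ∘ u) (Fin.rev ∘ v) L hL).1 *
          pluckerExt m n p (pluckerExchange m n t ht2 (Fin.rev ∘ u) (Fin.rev ∘ v) L hL).2
          else 0) := by
      refine Finset.sum_congr rfl fun L _ => ?_
      by_cases hL : L.card = t
      · rw [dif_pos hL, dif_pos hL, ext_rev, ext_rev, ← hε,
          exchange_comp m n n t ht2 u v L hL Fin.rev]
        dsimp only
        calc ε * pluckerExt m n p (Fin.rev ∘ (pluckerExchange m n t ht2 u v L hL).1) *
            (ε * pluckerExt m n p (Fin.rev ∘ (pluckerExchange m n t ht2 u v L hL).2))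
            = (ε * ε) * (pluckerExt m n p (Fin.rev ∘ (pluckerExchange m n t ht2 u v L hL).1) *
              pluckerExt m n p (Fin.rev ∘ (pluckerExchange m n t ht2 u v L hL).2)) := by ring
          _ = _ := by rw [hsq, one_mul]
      · rw [dif_neg hL, dif_neg hL]
    rw [hRHS, ← key]
    calc ε * pluckerExt m n p (Fin.rev ∘ u) * (ε * pluckerExt m n p (Fin.rev ∘ v))
        = (ε * ε) * (pluckerExt m n p (Fin.rev ∘ u) * pluckerExt m n p (Fin.rev ∘ v)) := by ring
      _ = _ := by rw [hsq, one_mul]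

end
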